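/- Let n ≥ 1, d ≥ 2 and let A = [a_ij] ∈ ℝ^{n×n} be symmetric with nonnegative entries and strictly diagonally dominant. Then for every initial configuration x, every cluster point of the sequence of iterates (f_A^k(x))_{k≥0} (i.e. every limit of a convergent subsequence) is a fixed point of f_A. -/

import Mathlib

open scoped BigOperators

open scoped RealInnerProductSpace

noncomputable section

/-- The consensus map `f_A` as a self-map of tuples of vectors. -/
def consMapFull {n d : ℕ} (A : Matrix (Fin n) (Fin n) ℝ)
    (x : Fin n → EuclideanSpace ℝ (Fin d)) : Fin n → EuclideanSpace ℝ (Fin d) :=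
  fun i => ‖∑ j, A i j • x j‖⁻¹ • ∑ j, A i j • x j

namespace Stmt12

variable {n d : ℕ}

/-- The weighted average vector. -/
def vv (A : Matrix (Fin n) (Fin n) ℝ) (x : Fin n → EuclideanSpace ℝ (Fin d)) (i : Fin n) :
    EuclideanSpace ℝ (Fin d) := ∑ j, A i j • x j

lemma consMapFull_apply (A : Matrix (Fin n) (Fin n) ℝ) (x : Fin n → EuclideanSpace ℝ (Fin d))
    (i : Fin n) : consMapFull A x i = ‖vv A x i‖⁻¹ • vv A x i := rfl

/-- The energy (Lyapunov function). -/
def En (A : Matrix (Fin n) (Fin n) ℝ) (x : Fin n → EuclideanSpace ℝ (Fin d)) : ℝ :=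
  ∑ i, ∑ j, A i j * ⟪x i, x j⟫

lemma norm_vv_pos (A : Matrix (Fin n) (Fin n) ℝ)
    (hApos : ∀ i j, 0 ≤ A i j)
    (hdd : ∀ i, ∑ j ∈ Finset.univ.erase i, A i j < A i i)
    (x : Fin n → EuclideanSpace ℝ (Fin d)) (hx : ∀ i, ‖x i‖ = 1) (i : Fin n) :
    0 < ‖vv A x i‖ := by
  have hsplit : vv A x i = A i i • x i + ∑ j ∈ Finset.univ.erase i, A i j • x j := by
    rw [vv, ← Finset.add_sum_erase _ _ (Finset.mem_univ i)]
  have h1 : ‖A i i • x i‖ = A i i := by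
    rw [norm_smul, hx i, Real.norm_eq_abs, abs_of_nonneg (hApos i i), mul_one]
  have h2 : ‖∑ j ∈ Finset.univ.erase i, A i j • x j‖ ≤ ∑ j ∈ Finset.univ.erase i, A i j := by
    refine (norm_sum_le _ _).trans (Finset.sum_le_sum fun j _ => ?_)
    rw [norm_smul, hx j, Real.norm_eq_abs, abs_of_nonneg (hApos i j), mul_one]
  have h3 : A i i ≤ ‖vv A x i‖ + ∑ j ∈ Finset.univ.erase i, A i j := by
    calc A i i = ‖A i i • x i‖ := h1.symm
      _ = ‖vv A x i - ∑ j ∈ Finset.univ.erase i, A i j • x j‖ := by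
            rw [hsplit]; congr 1; abel
      _ ≤ ‖vv A x i‖ + ‖∑ j ∈ Finset.univ.erase i, A i j • x j‖ := norm_sub_le _ _
      _ ≤ _ := by linarith
  linarith [hdd i]

lemma norm_consMapFull (A : Matrix (Fin n) (Fin n) ℝ)
    (hApos : ∀ i j, 0 ≤ A i j)
    (hdd : ∀ i, ∑ j ∈ Finset.univ.erase i, A i j < A i i)
    (x : Fin n → EuclideanSpace ℝ (Fin d)) (hx : ∀ i, ‖x i‖ = 1) (i : Fin n) :
    ‖consMapFull A x i‖ = 1 := by
  have h := norm_vv_pos A hApos hdd x hx i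
  rw [consMapFull_apply, norm_smul, Real.norm_eq_abs, abs_of_nonneg (inv_nonneg.2 h.le),
    inv_mul_cancel₀ h.ne']

lemma quad_nonneg (A : Matrix (Fin n) (Fin n) ℝ) (hAsym : A.IsSymm)
    (hApos : ∀ i j, 0 ≤ A i j)
    (hdd : ∀ i, ∑ j ∈ Finset.univ.erase i, A i j < A i i)
    (δ : Fin n → EuclideanSpace ℝ (Fin d)) :
    0 ≤ ∑ i, ∑ j, A i j * ⟪δ i, δ j⟫ := by
  set r : Fin n → ℝ := fun i => ‖δ i‖ with hr
  set T : Fin n → Fin n → ℝ := fun i j => A i j * (⟪δ i, δ j⟫ + (r i ^ 2 + r j ^ 2) / 2) with hT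
  have hTnn : ∀ i j, 0 ≤ T i j := by
    intro i j
    have h := abs_real_inner_le_norm (δ i) (δ j)
    have h' := abs_le.mp h
    have : 0 ≤ ⟪δ i, δ j⟫ + (r i ^ 2 + r j ^ 2) / 2 := by
      nlinarith [sq_nonneg (r i - r j), h'.1]
    exact mul_nonneg (hApos i j) this
  have hsplit : ∑ i, ∑ j, A i j * ⟪δ i, δ j⟫
      = (∑ i, ∑ j, T i j) - ∑ i, ∑ j, A i j * ((r i ^ 2 + r j ^ 2) / 2) := by
    rw [← Finset.sum_sub_distrib]
    refine Finset.sum_congr rfl fun i _ => ?_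
    rw [← Finset.sum_sub_distrib]
    refine Finset.sum_congr rfl fun j _ => ?_
    rw [hT]; ring
  have hcorr : ∑ i, ∑ j, A i j * ((r i ^ 2 + r j ^ 2) / 2)
      = ∑ i, (∑ j, A i j) * r i ^ 2 := by
    have e1 : ∑ i, ∑ j, A i j * ((r i ^ 2 + r j ^ 2) / 2)
        = (∑ i, ∑ j, A i j * r i ^ 2 / 2) + ∑ i, ∑ j, A i j * r j ^ 2 / 2 := by
      rw [← Finset.sum_add_distrib]
      refine Finset.sum_congr rfl fun i _ => ?_
      rw [← Finset.sum_add_distrib]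
      exact Finset.sum_congr rfl fun j _ => by ring
    have e2 : ∑ i, ∑ j, A i j * r j ^ 2 / 2 = ∑ i, ∑ j, A i j * r i ^ 2 / 2 := by
      rw [Finset.sum_comm]
      refine Finset.sum_congr rfl fun i _ => Finset.sum_congr rfl fun j _ => ?_
      rw [hAsym.apply i j]
    rw [e1, e2, ← Finset.sum_add_distrib]
    refine Finset.sum_congr rfl fun i _ => ?_
    rw [← Finset.sum_add_distrib, Finset.sum_mul]
    exact Finset.sum_congr rfl fun j _ => by ring
  have hdiag : ∑ i, T i i ≤ ∑ i, ∑ j, T i j :=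
    Finset.sum_le_sum fun i _ =>
      Finset.single_le_sum (fun j _ => hTnn i j) (Finset.mem_univ i)
  have hTii : ∀ i, T i i = 2 * A i i * r i ^ 2 := by
    intro i
    rw [hT]
    simp only [real_inner_self_eq_norm_sq]
    ring
  have hfin : ∑ i, ((∑ j, A i j) * r i ^ 2) ≤ ∑ i, T i i := by
    refine Finset.sum_le_sum fun i _ => ?_
    rw [hTii i]
    have hrow : ∑ j, A i j = A i i + ∑ j ∈ Finset.univ.erase i, A i j :=
      (Finset.add_sum_erase _ _ (Finset.mem_univ i)).symm
    nlinarith [sq_nonneg (r i), hdd i]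
  rw [hsplit, hcorr]
  linarith

lemma inner_vv (A : Matrix (Fin n) (Fin n) ℝ) (x w : Fin n → EuclideanSpace ℝ (Fin d))
    (i : Fin n) : ∑ j, A i j * ⟪w i, x j⟫ = ⟪w i, vv A x i⟫ := by
  rw [vv, inner_sum]
  exact Finset.sum_congr rfl fun j _ => (real_inner_smul_right _ _ _).symm

lemma gap_term_nonneg (A : Matrix (Fin n) (Fin n) ℝ)
    (x : Fin n → EuclideanSpace ℝ (Fin d)) (hx : ∀ i, ‖x i‖ = 1) (i : Fin n) :
    0 ≤ ‖vv A x i‖ - ⟪x i, vv A x i⟫ := by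
  have := real_inner_le_norm (x i) (vv A x i)
  rw [hx i, one_mul] at this
  linarith

lemma energy_step (A : Matrix (Fin n) (Fin n) ℝ) (hAsym : A.IsSymm)
    (hApos : ∀ i j, 0 ≤ A i j)
    (hdd : ∀ i, ∑ j ∈ Finset.univ.erase i, A i j < A i i)
    (x : Fin n → EuclideanSpace ℝ (Fin d)) (hx : ∀ i, ‖x i‖ = 1) :
    En A x + 2 * ∑ i, (‖vv A x i‖ - ⟪x i, vv A x i⟫) ≤ En A (consMapFull A x) := by
  set y := consMapFull A x with hy
  have hQ := quad_nonneg A hAsym hApos hdd (fun i => y i - x i)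
  have hexp : ∑ i, ∑ j, A i j * ⟪y i - x i, y j - x j⟫
      = En A y - (∑ i, ∑ j, A i j * ⟪y i, x j⟫) - (∑ i, ∑ j, A i j * ⟪x i, y j⟫)
        + En A x := by
    rw [En, En, ← Finset.sum_sub_distrib, ← Finset.sum_sub_distrib, ← Finset.sum_add_distrib]
    refine Finset.sum_congr rfl fun i _ => ?_
    rw [← Finset.sum_sub_distrib, ← Finset.sum_sub_distrib, ← Finset.sum_add_distrib]
    refine Finset.sum_congr rfl fun j _ => ?_
    rw [inner_sub_left, inner_sub_right, inner_sub_right]; ring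
  have hswap : ∑ i, ∑ j, A i j * ⟪x i, y j⟫ = ∑ i, ∑ j, A i j * ⟪y i, x j⟫ := by
    rw [Finset.sum_comm]
    exact Finset.sum_congr rfl fun i _ => Finset.sum_congr rfl fun j _ => by
      rw [hAsym.apply i j, real_inner_comm]
  have hCyx : ∑ i, ∑ j, A i j * ⟪y i, x j⟫ = ∑ i, ‖vv A x i‖ := by
    refine Finset.sum_congr rfl fun i _ => ?_
    rw [inner_vv]
    have hvpos := norm_vv_pos A hApos hdd x hx i
    rw [hy, consMapFull_apply, real_inner_smul_left, real_inner_self_eq_norm_sq, sq,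
      inv_mul_cancel_left₀ hvpos.ne']
  have hEnx : En A x = ∑ i, ⟪x i, vv A x i⟫ :=
    Finset.sum_congr rfl fun i _ => inner_vv A x x i
  have hgap : ∑ i, (‖vv A x i‖ - ⟪x i, vv A x i⟫)
      = (∑ i, ‖vv A x i‖) - ∑ i, ⟪x i, vv A x i⟫ := Finset.sum_sub_distrib _ _
  rw [hexp, hswap, hCyx] at hQ
  rw [hgap, hEnx]
  linarith

lemma en_le (A : Matrix (Fin n) (Fin n) ℝ) (hApos : ∀ i j, 0 ≤ A i j)
    (x : Fin n → EuclideanSpace ℝ (Fin d)) (hx : ∀ i, ‖x i‖ = 1) :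
    En A x ≤ ∑ i, ∑ j, A i j := by
  refine Finset.sum_le_sum fun i _ => Finset.sum_le_sum fun j _ => ?_
  have h := real_inner_le_norm (x i) (x j)
  rw [hx i, hx j, one_mul] at h
  nlinarith [hApos i j]

end Stmt12

open Stmt12 Filter in
set_option maxHeartbeats 1000000 in
/-- for a symmetric nonnegative strictly diagonally dominant weight matrix,
every cluster point of the sequence of iterates `f_A^k(x₀)` (limit of a convergent
subsequence) is a fixed point of `f_A`. -/
theorem stmt_12 (n d : ℕ) (hn : 1 ≤ n) (hd : 2 ≤ d)
    (A : Matrix (Fin n) (Fin n) ℝ)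
    (hAsym : A.IsSymm)
    (hApos : ∀ i j, 0 ≤ A i j)
    (hdd : ∀ i, ∑ j ∈ Finset.univ.erase i, A i j < A i i)
    (x₀ : Fin n → EuclideanSpace ℝ (Fin d)) (hx₀ : ∀ i, ‖x₀ i‖ = 1)
    (z : Fin n → EuclideanSpace ℝ (Fin d))
    (hz : ∃ φ : ℕ → ℕ, StrictMono φ ∧
        Filter.Tendsto (fun k => (consMapFull A)^[φ k] x₀) Filter.atTop (nhds z)) :
    consMapFull A z = z := by
  obtain ⟨φ, hφ, hlim⟩ := hz
  set f := consMapFull A with hf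
  -- iterates stay on the sphere
  have hunit : ∀ k, ∀ i, ‖(f^[k] x₀) i‖ = 1 := by
    intro k
    induction k with
    | zero => simpa using hx₀
    | succ k ih =>
        rw [Function.iterate_succ_apply']
        exact norm_consMapFull A hApos hdd _ ih
  -- z is on the sphere
  have hzi : ∀ i, ‖z i‖ = 1 := by
    intro i
    have h1 : Tendsto (fun k => (f^[φ k] x₀) i) atTop (nhds (z i)) :=
      (continuous_apply i).continuousAt.tendsto.comp hlim
    have h2 : Tendsto (fun k => ‖(f^[φ k] x₀) i‖) atTop (nhds ‖z i‖) := h1.norm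
    have h3 : Tendsto (fun k : ℕ => (1 : ℝ)) atTop (nhds ‖z i‖) := by
      simpa [hunit] using h2
    exact tendsto_nhds_unique h3 tendsto_const_nhds
  -- energy is monotone and bounded, hence converges
  have hmono : Monotone fun k => En A (f^[k] x₀) := by
    apply monotone_nat_of_le_succ
    intro k
    rw [Function.iterate_succ_apply']
    have hstep := energy_step A hAsym hApos hdd _ (hunit k)
    have hgap : 0 ≤ ∑ i, (‖vv A (f^[k] x₀) i‖ - ⟪(f^[k] x₀) i, vv A (f^[k] x₀) i⟫) :=
      Finset.sum_nonneg fun i _ => gap_term_nonneg A _ (hunit k) i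
    linarith
  have hbdd : BddAbove (Set.range fun k => En A (f^[k] x₀)) := by
    refine ⟨∑ i, ∑ j, A i j, ?_⟩
    rintro _ ⟨k, rfl⟩
    exact en_le A hApos _ (hunit k)
  have hL : Tendsto (fun k => En A (f^[k] x₀)) atTop
      (nhds (⨆ k, En A (f^[k] x₀))) := tendsto_atTop_ciSup hmono hbdd
  set L := ⨆ k, En A (f^[k] x₀) with hLdef
  -- continuity of En along convergent sequences
  have hEnCont : ∀ (u : ℕ → Fin n → EuclideanSpace ℝ (Fin d))
      (w : Fin n → EuclideanSpace ℝ (Fin d)),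
      Tendsto u atTop (nhds w) → Tendsto (fun k => En A (u k)) atTop (nhds (En A w)) := by
    intro u w hu
    refine tendsto_finset_sum _ fun i _ => tendsto_finset_sum _ fun j _ => ?_
    have hi : Tendsto (fun k => u k i) atTop (nhds (w i)) :=
      (continuous_apply i).continuousAt.tendsto.comp hu
    have hj : Tendsto (fun k => u k j) atTop (nhds (w j)) :=
      (continuous_apply j).continuousAt.tendsto.comp hu
    exact (hi.inner hj).const_mul _
  -- En z = L
  have hEz : En A z = L :=
    tendsto_nhds_unique (hEnCont _ z hlim) (hL.comp hφ.tendsto_atTop)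
  -- f is continuous at z, so f (f^[φ k] x₀) → f z
  have hfz : Tendsto (fun k => f (f^[φ k] x₀)) atTop (nhds (f z)) := by
    rw [tendsto_pi_nhds]
    intro i
    have hvz : Tendsto (fun k => vv A (f^[φ k] x₀) i) atTop (nhds (vv A z i)) := by
      refine tendsto_finset_sum _ fun j _ => ?_
      exact ((continuous_apply j).continuousAt.tendsto.comp hlim).const_smul _
    have hvpos := norm_vv_pos A hApos hdd z hzi i
    have hninv : Tendsto (fun k => ‖vv A (f^[φ k] x₀) i‖⁻¹) atTop
        (nhds ‖vv A z i‖⁻¹) := (hvz.norm).inv₀ hvpos.ne'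
    have := hninv.smul hvz
    simpa only [hf, consMapFull_apply] using this
  -- En (f z) = L
  have hEfz : En A (f z) = L := by
    have h1 : Tendsto (fun k => En A (f (f^[φ k] x₀))) atTop (nhds (En A (f z))) :=
      hEnCont _ _ hfz
    have h2 : Tendsto (fun k => En A (f^[φ k + 1] x₀)) atTop (nhds L) := by
      refine hL.comp (tendsto_atTop_mono (fun k => Nat.le_succ (φ k)) hφ.tendsto_atTop)
    have heq : (fun k => En A (f (f^[φ k] x₀))) = fun k => En A (f^[φ k + 1] x₀) := by
      funext k
      rw [Function.iterate_succ_apply']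
    rw [heq] at h1
    exact tendsto_nhds_unique h1 h2
  -- the gap at z vanishes
  have hstep := energy_step A hAsym hApos hdd z hzi
  have hgapnn : ∀ i ∈ Finset.univ, 0 ≤ ‖vv A z i‖ - ⟪z i, vv A z i⟫ :=
    fun i _ => gap_term_nonneg A z hzi i
  have hgap0 : ∑ i, (‖vv A z i‖ - ⟪z i, vv A z i⟫) = 0 := by
    have h1 : 0 ≤ ∑ i, (‖vv A z i‖ - ⟪z i, vv A z i⟫) := Finset.sum_nonneg hgapnn
    have hstep' : En A z + 2 * ∑ i, (‖vv A z i‖ - ⟪z i, vv A z i⟫) ≤ En A (f z) := hstep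
    rw [hEz, hEfz] at hstep'
    linarith
  have hterm : ∀ i, ‖vv A z i‖ = ⟪z i, vv A z i⟫ := by
    intro i
    have := (Finset.sum_eq_zero_iff_of_nonneg hgapnn).mp hgap0 i (Finset.mem_univ i)
    linarith
  -- conclude fixed point
  funext i
  have hvpos := norm_vv_pos A hApos hdd z hzi i
  have hfz1 : ‖consMapFull A z i‖ = 1 := norm_consMapFull A hApos hdd z hzi i
  have hinner : ⟪consMapFull A z i, z i⟫ = 1 := by
    rw [consMapFull_apply, real_inner_smul_left, real_inner_comm, ← hterm i,
      inv_mul_cancel₀ hvpos.ne']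
  exact (inner_eq_one_iff_of_norm_eq_one hfz1 (hzi i)).mp hinner

end
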